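/- Let P be a two-orbit n-polytope in class 2_I with base flag Φ, and let -1 ≤ r ≤ s ≤ n, J = N \ {r+1,...,s-1}. Then the subgroup Γ_J (the stabilizer of Φ_J) acts flag-transitively on the section Φ_s/Φ_r if and only if {r+1,...,s-1} ⊆ I; and in that case Φ_s/Φ_r is a regular polytope. -/

import Mathlib

/-- An abstract polytope of rank `n`, presented by a partially ordered type of faces
with a strictly monotone rank function onto `{-1, 0, ..., n}`, such that every flag
(maximal chain) has exactly one face of each rank (`faceAt`), every flag has a unique
`i`-adjacent flag for each `i = 0, ..., n-1` (the diamond condition, via `adj`), and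
which is strongly flag-connected. -/
structure AbstractPolytope (n : ℕ) (Face : Type*) [PartialOrder Face] where
  rank : Face → ℤ
  rank_strictMono : ∀ {F G : Face}, F < G → rank F < rank G
  rank_le : ∀ F : Face, -1 ≤ rank F ∧ rank F ≤ (n : ℤ)
  /-- the unique face of rank `i` in the flag `Φ`, for `-1 ≤ i ≤ n` -/
  faceAt : Flag Face → ℤ → Face
  faceAt_mem : ∀ (Φ : Flag Face) (i : ℤ), -1 ≤ i → i ≤ (n : ℤ) → faceAt Φ i ∈ Φ
  faceAt_rank : ∀ (Φ : Flag Face) (i : ℤ), -1 ≤ i → i ≤ (n : ℤ) → rank (faceAt Φ i) = i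
  faceAt_eq : ∀ (Φ : Flag Face) (F : Face), F ∈ Φ → faceAt Φ (rank F) = F
  /-- the unique `i`-adjacent flag of `Φ`, for `0 ≤ i ≤ n-1` -/
  adj : Flag Face → ℕ → Flag Face
  adj_ne : ∀ (Φ : Flag Face) (i : ℕ), i < n → adj Φ i ≠ Φ
  adj_mem : ∀ (Φ : Flag Face) (i : ℕ), i < n →
    ∀ F ∈ Φ, rank F ≠ (i : ℤ) → F ∈ adj Φ i
  adj_unique : ∀ (Φ Ψ : Flag Face) (i : ℕ), i < n → Ψ ≠ Φ →
    (∀ F ∈ Φ, rank F ≠ (i : ℤ) → F ∈ Ψ) → Ψ = adj Φ i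
  /-- strong flag-connectedness: any two flags are joined by a sequence of successively
  adjacent flags, with all adjacencies at ranks not occurring among their common faces -/
  connected : ∀ Φ Ψ : Flag Face, ∃ (l : ℕ) (c : ℕ → Flag Face), c 0 = Φ ∧ c l = Ψ ∧
    ∀ m < l, ∃ i : ℕ, i < n ∧ c (m + 1) = adj (c m) i ∧
      ∀ F : Face, F ∈ Φ → F ∈ Ψ → rank F ≠ (i : ℤ)

namespace AbstractPolytope

variable {n : ℕ} {Face : Type*} [PartialOrder Face]

/-- The automorphism group `Γ(P)`: order automorphisms of the set of faces.
It acts on flags via `Flag.map`; `g • Φ` denotes the image flag. -/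
instance : MulAction (Face ≃o Face) (Flag Face) where
  smul g Φ := Flag.map g Φ
  one_smul Φ := by
    show Flag.map 1 Φ = Φ
    ext x
    simp [Flag.map, Flag.ofIsMaxChain]
  mul_smul g h Φ := by
    show Flag.map (g * h) Φ = Flag.map g (Flag.map h Φ)
    ext x
    simp [Flag.map, Flag.ofIsMaxChain, Set.image_image]

lemma smul_flag_def (g : Face ≃o Face) (Φ : Flag Face) : g • Φ = Flag.map g Φ := rfl

/-- Two flags lie in the same orbit under the automorphism group. -/
def SameOrbit (Φ Ψ : Flag Face) : Prop := ∃ g : Face ≃o Face, g • Φ = Ψ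

/-- The polytope has exactly two orbits on flags. -/
def TwoOrbit (_A : AbstractPolytope n Face) : Prop :=
  ∃ Φ Ψ : Flag Face, ¬ SameOrbit Φ Ψ ∧ ∀ X : Flag Face, SameOrbit X Φ ∨ SameOrbit X Ψ

/-- `I` is the class type set of the two-orbit polytope `A`: it consists precisely of
those ranks `i ∈ {0,...,n-1}` such that every flag and its `i`-adjacent flag lie in the
same orbit; that is, `A` is in the class `2_I`. -/
def InClass (A : AbstractPolytope n Face) (I : Set ℕ) : Prop :=
  (∀ i ∈ I, i < n) ∧ ∀ i : ℕ, i < n → (i ∈ I ↔ ∀ Φ : Flag Face, SameOrbit Φ (A.adj Φ i))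

/-- The stabilizer in the automorphism group of a face `F`. -/
def faceStab (_A : AbstractPolytope n Face) (F : Face) : Subgroup (Face ≃o Face) where
  carrier := {g : Face ≃o Face | g F = F}
  one_mem' := rfl
  mul_mem' := by
    intro a b ha hb
    show (a * b) F = F
    rw [RelIso.mul_apply]
    rw [show b F = F from hb, show a F = F from ha]
  inv_mem' := by
    intro a ha
    show a⁻¹ F = F
    conv_lhs => rw [← show a F = F from ha]
    exact a.symm_apply_apply F

lemma mem_faceStab {A : AbstractPolytope n Face} {F : Face} {g : Face ≃o Face} :
    g ∈ A.faceStab F ↔ g F = F := Iff.rfl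

end AbstractPolytope

namespace AbstractPolytope

variable {n : ℕ} {Face : Type*} [PartialOrder Face]

lemma mem_smul_flag {g : Face ≃o Face} {Ψ : Flag Face} {F : Face} (h : F ∈ Ψ) :
    g F ∈ g • Ψ := ⟨F, h, rfl⟩

lemma mem_smul_iff {g : Face ≃o Face} {Ψ : Flag Face} {F : Face} :
    F ∈ g • Ψ ↔ g.symm F ∈ Ψ := by
  constructor
  · rintro ⟨F', hF', rfl⟩; simpa using hF'
  · intro h
    have := mem_smul_flag (g := g) h
    rwa [g.apply_symm_apply] at this

lemma exists_mem_flag (F : Face) : ∃ Ψ : Flag Face, F ∈ Ψ := by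
  have hc : IsChain (· ≤ ·) ({F} : Set Face) := Set.pairwise_singleton _ _
  obtain ⟨M, hM, hFM⟩ := hc.exists_maxChain
  exact ⟨Flag.ofIsMaxChain M hM, hFM rfl⟩

variable (A : AbstractPolytope n Face)

lemma eq_of_rank_eq {Ψ : Flag Face} {F G : Face} (hF : F ∈ Ψ) (hG : G ∈ Ψ)
    (h : A.rank F = A.rank G) : F = G := by
  rw [← A.faceAt_eq Ψ F hF, ← A.faceAt_eq Ψ G hG, h]

lemma le_iff_rank_le {Ψ : Flag Face} {F G : Face} (hF : F ∈ Ψ) (hG : G ∈ Ψ) :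
    F ≤ G ↔ A.rank F ≤ A.rank G := by
  constructor
  · intro h
    rcases eq_or_lt_of_le h with rfl | h
    · exact le_rfl
    · exact (A.rank_strictMono h).le
  · intro h
    rcases Ψ.le_or_le hF hG with h' | h'
    · exact h'
    · rcases eq_or_lt_of_le h' with rfl | h'
      · exact le_rfl
      · exact absurd (A.rank_strictMono h') (by omega)

lemma rank_le_rank_map (g : Face ≃o Face) (F : Face) : A.rank F ≤ A.rank (g F) := by
  obtain ⟨Ψ, hF⟩ := exists_mem_flag F
  have key : ∀ i : ℤ, -1 ≤ i → i ≤ (n : ℤ) → i ≤ A.rank (g (A.faceAt Ψ i)) := by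
    refine fun i hi => Int.le_induction
      (motive := fun j _ => j ≤ (n : ℤ) → j ≤ A.rank (g (A.faceAt Ψ j))) ?_ ?_ i hi
    · intro _; exact (A.rank_le _).1
    · intro i h1 ih
      intro h2
      have h2' : i ≤ (n : ℤ) := by omega
      have hih := ih h2'
      have hlt : A.faceAt Ψ i < A.faceAt Ψ (i + 1) := by
        have hle : A.faceAt Ψ i ≤ A.faceAt Ψ (i + 1) :=
          (A.le_iff_rank_le (A.faceAt_mem Ψ i (by omega) h2')
            (A.faceAt_mem Ψ (i + 1) (by omega) h2)).2
            (by rw [A.faceAt_rank Ψ i (by omega) h2', A.faceAt_rank Ψ (i + 1) (by omega) h2]; omega)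
        refine lt_of_le_of_ne hle fun hEq => ?_
        have := congrArg A.rank hEq
        rw [A.faceAt_rank Ψ i (by omega) h2', A.faceAt_rank Ψ (i + 1) (by omega) h2] at this
        omega
      have := A.rank_strictMono (g.strictMono hlt)
      omega
  have h1 := (A.rank_le F).1
  have h2 := (A.rank_le F).2
  have := key (A.rank F) h1 h2
  rwa [A.faceAt_eq Ψ F hF] at this

lemma rank_map (g : Face ≃o Face) (F : Face) : A.rank (g F) = A.rank F := by
  have h1 := A.rank_le_rank_map g F
  have h2 := A.rank_le_rank_map g.symm (g F)
  rw [g.symm_apply_apply] at h2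
  omega

lemma faceAt_smul (g : Face ≃o Face) (Ψ : Flag Face) {i : ℤ} (h1 : -1 ≤ i) (h2 : i ≤ (n : ℤ)) :
    A.faceAt (g • Ψ) i = g (A.faceAt Ψ i) := by
  have hm : g (A.faceAt Ψ i) ∈ g • Ψ := mem_smul_flag (A.faceAt_mem Ψ i h1 h2)
  have := A.faceAt_eq (g • Ψ) _ hm
  rwa [A.rank_map, A.faceAt_rank Ψ i h1 h2] at this

lemma smul_adj (g : Face ≃o Face) (Ψ : Flag Face) {i : ℕ} (hi : i < n) :
    g • A.adj Ψ i = A.adj (g • Ψ) i := by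
  apply A.adj_unique _ _ i hi
  · intro h
    exact A.adj_ne Ψ i hi (smul_left_cancel_iff g |>.1 h)
  · intro F hF hrank
    rw [mem_smul_iff] at hF ⊢
    apply A.adj_mem Ψ i hi _ hF
    have : A.rank (g (g.symm F)) = A.rank (g.symm F) := A.rank_map g _
    rw [g.apply_symm_apply] at this
    omega

lemma mem_of_mem_adj {Ψ : Flag Face} {i : ℕ} (hi : i < n) {F : Face}
    (hF : F ∈ A.adj Ψ i) (hr : A.rank F ≠ (i : ℤ)) : F ∈ Ψ := by
  have h1 := (A.rank_le F).1
  have h2 := (A.rank_le F).2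
  have hmem : A.faceAt Ψ (A.rank F) ∈ A.adj Ψ i :=
    A.adj_mem Ψ i hi _ (A.faceAt_mem Ψ _ h1 h2)
      (by rw [A.faceAt_rank Ψ _ h1 h2]; exact hr)
  have hEq : F = A.faceAt Ψ (A.rank F) :=
    A.eq_of_rank_eq hF hmem (by rw [A.faceAt_rank Ψ _ h1 h2])
  rw [hEq]
  exact A.faceAt_mem Ψ _ h1 h2

lemma adj_adj (Ψ : Flag Face) {i : ℕ} (hi : i < n) : A.adj (A.adj Ψ i) i = Ψ := by
  symm
  apply A.adj_unique _ _ i hi (Ne.symm (A.adj_ne Ψ i hi))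
  intro F hF hrank
  exact A.mem_of_mem_adj hi hF hrank

end AbstractPolytope
namespace AbstractPolytope

variable {n : ℕ} {Face : Type*} [PartialOrder Face]

lemma SameOrbit.refl (Ψ : Flag Face) : SameOrbit Ψ Ψ := ⟨1, one_smul _ _⟩

lemma SameOrbit.symm {Φ Ψ : Flag Face} (h : SameOrbit Φ Ψ) : SameOrbit Ψ Φ := by
  obtain ⟨g, rfl⟩ := h
  exact ⟨g⁻¹, inv_smul_smul g Φ⟩

lemma SameOrbit.trans {Φ Ψ X : Flag Face} (h : SameOrbit Φ Ψ) (h' : SameOrbit Ψ X) :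
    SameOrbit Φ X := by
  obtain ⟨g, rfl⟩ := h
  obtain ⟨g', rfl⟩ := h'
  exact ⟨g' * g, mul_smul g' g Φ⟩

variable (A : AbstractPolytope n Face)

lemma sameOrbit_adj {Φ Ψ : Flag Face} (h : SameOrbit Φ Ψ) {k : ℕ} (hk : k < n) :
    SameOrbit (A.adj Φ k) (A.adj Ψ k) := by
  obtain ⟨g, rfl⟩ := h
  exact ⟨g, A.smul_adj g Φ hk⟩

lemma twoOrbit_dichotomy (h2 : A.TwoOrbit) {a b : Flag Face} (hab : ¬ SameOrbit a b)
    (c : Flag Face) : SameOrbit c a ∨ SameOrbit c b := by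
  obtain ⟨X, Y, hXY, hcov⟩ := h2
  rcases hcov a with ha | ha <;> rcases hcov b with hb | hb <;> rcases hcov c with hc | hc <;>
    first
      | exact absurd (ha.trans hb.symm) hab
      | exact Or.inl (hc.trans ha.symm)
      | exact Or.inr (hc.trans hb.symm)

lemma mem_class_of_one {I : Set ℕ} (h2 : A.TwoOrbit) (hI : A.InClass I) {k : ℕ} (hk : k < n)
    {Φ₀ : Flag Face} (h : SameOrbit Φ₀ (A.adj Φ₀ k)) : k ∈ I := by
  rw [hI.2 k hk]
  intro Ψ
  by_contra hno
  rcases A.twoOrbit_dichotomy h2 hno Φ₀ with hc | hc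
  · exact hno ((hc.symm.trans h).trans (A.sameOrbit_adj hc hk))
  · have h3 := A.sameOrbit_adj hc hk
    rw [A.adj_adj Ψ hk] at h3
    exact hno ((h3.symm.trans h.symm).trans hc)

lemma faceAt_mem_all {t : ℤ} (h1 : -1 ≤ t) (h2 : t ≤ (n : ℤ))
    (h3 : ∀ i : ℕ, i < n → t ≠ (i : ℤ)) (Φ Ψ : Flag Face) : A.faceAt Φ t ∈ Ψ := by
  obtain ⟨l, c, hc0, hcl, hstep⟩ := A.connected Φ Ψ
  suffices h : ∀ m ≤ l, A.faceAt Φ t ∈ c m by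
    rw [← hcl]; exact h l le_rfl
  intro m
  induction m with
  | zero => intro _; rw [hc0]; exact A.faceAt_mem Φ t h1 h2
  | succ m ih =>
    intro hm
    obtain ⟨i, hi, heq, -⟩ := hstep m (by omega)
    rw [heq]
    exact A.adj_mem _ i hi _ (ih (by omega)) (by rw [A.faceAt_rank Φ t h1 h2]; exact h3 i hi)

lemma eq_faceAt_of_rank_extreme {t : ℤ} (h1 : -1 ≤ t) (h2 : t ≤ (n : ℤ))
    (h3 : ∀ i : ℕ, i < n → t ≠ (i : ℤ)) (Φ : Flag Face) {F : Face} (hF : A.rank F = t) :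
    F = A.faceAt Φ t := by
  obtain ⟨X, hX⟩ := exists_mem_flag F
  have h4 := A.faceAt_mem_all h1 h2 h3 Φ X
  have e1 : A.faceAt X t = F := by rw [← hF]; exact A.faceAt_eq X F hX
  have e2 := A.faceAt_eq X (A.faceAt Φ t) h4
  rw [A.faceAt_rank Φ t h1 h2] at e2
  rw [← e1, e2]

end AbstractPolytope
namespace AbstractPolytope

variable {n : ℕ} {Face : Type*} [PartialOrder Face] (A : AbstractPolytope n Face)

lemma gamma_transitive {I : Set ℕ} (hI : A.InClass I) (Φ : Flag Face) {r s : ℤ}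
    (hsub : ∀ k : ℕ, k < n → r < (k : ℤ) → (k : ℤ) < s → k ∈ I)
    {Ψ₁ Ψ₂ : Flag Face}
    (h1 : ∀ j : ℕ, j < n → ¬(r < (j : ℤ) ∧ (j : ℤ) < s) → A.faceAt Φ (j : ℤ) ∈ Ψ₁)
    (h2 : ∀ j : ℕ, j < n → ¬(r < (j : ℤ) ∧ (j : ℤ) < s) → A.faceAt Φ (j : ℤ) ∈ Ψ₂) :
    ∃ g ∈ ⨅ j ∈ {j : ℕ | j < n ∧ ¬(r < (j : ℤ) ∧ (j : ℤ) < s)},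
        A.faceStab (A.faceAt Φ (j : ℤ)), g • Ψ₁ = Ψ₂ := by
  obtain ⟨l, c, hc0, hcl, hstep⟩ := A.connected Ψ₁ Ψ₂
  suffices h : ∀ m ≤ l,
      (∀ j : ℕ, j < n → ¬(r < (j : ℤ) ∧ (j : ℤ) < s) → A.faceAt Φ (j : ℤ) ∈ c m) ∧
      ∃ g ∈ ⨅ j ∈ {j : ℕ | j < n ∧ ¬(r < (j : ℤ) ∧ (j : ℤ) < s)},
          A.faceStab (A.faceAt Φ (j : ℤ)), g • Ψ₁ = c m by
    obtain ⟨-, g, hg, hge⟩ := h l le_rfl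
    exact ⟨g, hg, by rw [hge, hcl]⟩
  intro m
  induction m with
  | zero => intro _; rw [hc0]; exact ⟨h1, 1, one_mem _, one_smul _ _⟩
  | succ m ih =>
    intro hm
    obtain ⟨hmem, g, hg, hge⟩ := ih (by omega)
    obtain ⟨i, hi, heq, hcommon⟩ := hstep m (by omega)
    have hiS : r < (i : ℤ) ∧ (i : ℤ) < s := by
      by_contra hiS
      exact hcommon _ (h1 i hi hiS) (h2 i hi hiS) (A.faceAt_rank Φ i (by omega) (by omega))
    have horb : SameOrbit (c m) (A.adj (c m) i) := (hI.2 i hi).1 (hsub i hi hiS.1 hiS.2) (c m)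
    obtain ⟨h', hh'⟩ := horb
    have hmem' : ∀ j : ℕ, j < n → ¬(r < (j : ℤ) ∧ (j : ℤ) < s) →
        A.faceAt Φ (j : ℤ) ∈ c (m + 1) := by
      intro j hj hjS
      rw [heq]
      refine A.adj_mem _ i hi _ (hmem j hj hjS) ?_
      rw [A.faceAt_rank Φ j (by omega) (by omega)]
      intro hji
      rw [hji] at hjS
      exact hjS hiS
    have hfix : h' ∈ ⨅ j ∈ {j : ℕ | j < n ∧ ¬(r < (j : ℤ) ∧ (j : ℤ) < s)},
        A.faceStab (A.faceAt Φ (j : ℤ)) := by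
      rw [Subgroup.mem_iInf]
      intro j
      rw [Subgroup.mem_iInf]
      rintro ⟨hj, hjS⟩
      have m1 : A.faceAt Φ (j : ℤ) ∈ c (m + 1) := hmem' j hj hjS
      have m2 : h' (A.faceAt Φ (j : ℤ)) ∈ c (m + 1) := by
        rw [heq, ← hh']
        exact mem_smul_flag (hmem j hj hjS)
      exact A.eq_of_rank_eq m2 m1 (by rw [A.rank_map])
    exact ⟨hmem', h' * g, mul_mem hfix hg, by rw [mul_smul, hge, hh', ← heq]⟩

lemma exists_lift (Φ : Flag Face) {r s : ℤ} (hr : -1 ≤ r) (hrs : r ≤ s) (hs : s ≤ (n : ℤ))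
    (Φ' : Flag {H : Face // A.faceAt Φ r ≤ H ∧ H ≤ A.faceAt Φ s}) :
    ∃ M : Flag Face,
      (∀ j : ℕ, j < n → ¬(r < (j : ℤ) ∧ (j : ℤ) < s) → A.faceAt Φ (j : ℤ) ∈ M) ∧
      (∀ x : {H : Face // A.faceAt Φ r ≤ H ∧ H ≤ A.faceAt Φ s}, x.1 ∈ M ↔ x ∈ Φ') := by
  have hrn : r ≤ (n : ℤ) := le_trans hrs hs
  have hsn : -1 ≤ s := le_trans hr hrs
  have hFrm : A.faceAt Φ r ∈ Φ := A.faceAt_mem Φ r hr hrn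
  have hFsm : A.faceAt Φ s ∈ Φ := A.faceAt_mem Φ s hsn hs
  have hcross : ∀ F, F ∈ Φ → ¬(r < A.rank F ∧ A.rank F < s) →
      ∀ x : {H : Face // A.faceAt Φ r ≤ H ∧ H ≤ A.faceAt Φ s}, F ≤ x.1 ∨ x.1 ≤ F := by
    intro F hFΦ hFr' x
    rcases not_and_or.1 hFr' with h | h
    · left
      calc F ≤ A.faceAt Φ r :=
            (A.le_iff_rank_le hFΦ hFrm).2 (by rw [A.faceAt_rank Φ r hr hrn]; omega)
        _ ≤ x.1 := x.2.1
    · right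
      calc x.1 ≤ A.faceAt Φ s := x.2.2
        _ ≤ F := (A.le_iff_rank_le hFsm hFΦ).2 (by rw [A.faceAt_rank Φ s hsn hs]; omega)
  have hchain : IsChain (· ≤ ·)
      ((Subtype.val '' (Φ' : Set {H : Face // A.faceAt Φ r ≤ H ∧ H ≤ A.faceAt Φ s})) ∪
        {F | F ∈ Φ ∧ ¬(r < A.rank F ∧ A.rank F < s)}) := by
    rintro a (⟨x, hx, rfl⟩ | ⟨haΦ, har⟩) b hb hne
    · rcases hb with ⟨y, hy, rfl⟩ | ⟨hbΦ, hbr⟩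
      · rcases Φ'.le_or_le hx hy with h | h
        · exact Or.inl h
        · exact Or.inr h
      · rcases hcross b hbΦ hbr x with h | h
        · exact Or.inr h
        · exact Or.inl h
    · rcases hb with ⟨y, hy, rfl⟩ | ⟨hbΦ, hbr⟩
      · exact hcross a haΦ har y
      · exact Φ.le_or_le haΦ hbΦ
  obtain ⟨Mc, hMc, hTM⟩ := hchain.exists_maxChain
  refine ⟨Flag.ofIsMaxChain Mc hMc, ?_, ?_⟩
  · intro j hj hjS
    apply hTM
    refine Or.inr ⟨A.faceAt_mem Φ j (by omega) (by omega), ?_⟩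
    rw [A.faceAt_rank Φ j (by omega) (by omega)]
    exact hjS
  · intro x
    constructor
    · intro hxM
      rw [Flag.mem_iff_forall_le_or_ge]
      intro y hy
      have hyM : y.1 ∈ Flag.ofIsMaxChain Mc hMc := hTM (Or.inl ⟨y, hy, rfl⟩)
      rcases (Flag.ofIsMaxChain Mc hMc).le_or_le hxM hyM with h | h
      · exact Or.inl h
      · exact Or.inr h
    · intro hx
      exact hTM (Or.inl ⟨x, hx, rfl⟩)

end AbstractPolytope
open AbstractPolytope in
/-- With `J = N \ {r+1,...,s-1}`, the stabilizer `Γ_J` of `Φ_J` acts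
flag-transitively on the section `Φ_s/Φ_r` (whose flags correspond to the flags of `P`
containing `Φ_J`) if and only if `{r+1,...,s-1} ⊆ I`; and in that case the section
`Φ_s/Φ_r` is a regular polytope (its automorphism group is flag-transitive). -/
theorem stmt13 {n : ℕ} {Face : Type*} [PartialOrder Face] (A : AbstractPolytope n Face)
    (I : Set ℕ) (h2 : A.TwoOrbit) (hI : A.InClass I) (Φ : Flag Face)
    (r s : ℤ) (hr : -1 ≤ r) (hrs : r ≤ s) (hs : s ≤ (n : ℤ)) :
    ((∀ Ψ₁ Ψ₂ : Flag Face,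
        (∀ j : ℕ, j < n → ¬(r < (j : ℤ) ∧ (j : ℤ) < s) → A.faceAt Φ (j : ℤ) ∈ Ψ₁) →
        (∀ j : ℕ, j < n → ¬(r < (j : ℤ) ∧ (j : ℤ) < s) → A.faceAt Φ (j : ℤ) ∈ Ψ₂) →
        ∃ g ∈ ⨅ j ∈ {j : ℕ | j < n ∧ ¬(r < (j : ℤ) ∧ (j : ℤ) < s)},
            A.faceStab (A.faceAt Φ (j : ℤ)),
          g • Ψ₁ = Ψ₂)
      ↔ (∀ k : ℕ, k < n → r < (k : ℤ) → (k : ℤ) < s → k ∈ I))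
    ∧ ((∀ k : ℕ, k < n → r < (k : ℤ) → (k : ℤ) < s → k ∈ I) →
        ∀ Φ' Ψ' : Flag {H : Face // A.faceAt Φ r ≤ H ∧ H ≤ A.faceAt Φ s},
          ∃ e : {H : Face // A.faceAt Φ r ≤ H ∧ H ≤ A.faceAt Φ s} ≃o
              {H : Face // A.faceAt Φ r ≤ H ∧ H ≤ A.faceAt Φ s},
            e • Φ' = Ψ') := by
  constructor
  · constructor
    · intro htrans k hk hrk hks
      have hΦ : ∀ j : ℕ, j < n → ¬(r < (j : ℤ) ∧ (j : ℤ) < s) → A.faceAt Φ (j : ℤ) ∈ Φ :=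
        fun j hj _ => A.faceAt_mem Φ j (by omega) (by omega)
      have hA : ∀ j : ℕ, j < n → ¬(r < (j : ℤ) ∧ (j : ℤ) < s) →
          A.faceAt Φ (j : ℤ) ∈ A.adj Φ k := by
        intro j hj hjS
        refine A.adj_mem Φ k hk _ (A.faceAt_mem Φ j (by omega) (by omega)) ?_
        rw [A.faceAt_rank Φ j (by omega) (by omega)]
        intro hjk
        rw [hjk] at hjS
        exact hjS ⟨hrk, hks⟩
      obtain ⟨g, -, hg⟩ := htrans Φ (A.adj Φ k) hΦ hA
      exact A.mem_class_of_one h2 hI hk ⟨g, hg⟩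
    · intro hsub Ψ₁ Ψ₂ hA1 hA2
      exact A.gamma_transitive hI Φ hsub hA1 hA2
  · intro hsub Φ' Ψ'
    have hrn : r ≤ (n : ℤ) := le_trans hrs hs
    have hsn : -1 ≤ s := le_trans hr hrs
    obtain ⟨M1, hM1j, hM1iff⟩ := A.exists_lift Φ hr hrs hs Φ'
    obtain ⟨M2, hM2j, hM2iff⟩ := A.exists_lift Φ hr hrs hs Ψ'
    obtain ⟨g, hg, hgM⟩ := A.gamma_transitive hI Φ hsub hM1j hM2j
    have hgj : ∀ j : ℕ, j < n → ¬(r < (j : ℤ) ∧ (j : ℤ) < s) →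
        g (A.faceAt Φ (j : ℤ)) = A.faceAt Φ (j : ℤ) := by
      intro j hj hjS
      have h' := Subgroup.mem_iInf.mp hg j
      exact Subgroup.mem_iInf.mp h' ⟨hj, hjS⟩
    have hgFr : g (A.faceAt Φ r) = A.faceAt Φ r := by
      by_cases hc1 : r = -1
      · subst hc1
        exact A.eq_faceAt_of_rank_extreme (by omega) (by omega) (fun i hi => by omega) Φ
          (by rw [A.rank_map, A.faceAt_rank Φ (-1) (by omega) (by omega)])
      · by_cases hc2 : r = (n : ℤ)
        · subst hc2
          exact A.eq_faceAt_of_rank_extreme (le_trans hr hrn) le_rfl (fun i hi => by omega) Φ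
            (by rw [A.rank_map, A.faceAt_rank Φ _ (le_trans hr hrn) le_rfl])
        · have h0r : 0 ≤ r := by omega
          have hcast : ((r.toNat : ℕ) : ℤ) = r := Int.toNat_of_nonneg h0r
          have := hgj r.toNat (by omega) (by rw [hcast]; intro h; exact absurd h.1 (lt_irrefl r))
          rwa [hcast] at this
    have hgFs : g (A.faceAt Φ s) = A.faceAt Φ s := by
      by_cases hc1 : s = -1
      · subst hc1
        exact A.eq_faceAt_of_rank_extreme (by omega) (by omega) (fun i hi => by omega) Φ
          (by rw [A.rank_map, A.faceAt_rank Φ (-1) (by omega) (by omega)])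
      · by_cases hc2 : s = (n : ℤ)
        · subst hc2
          exact A.eq_faceAt_of_rank_extreme (le_trans hsn le_rfl) le_rfl (fun i hi => by omega) Φ
            (by rw [A.rank_map, A.faceAt_rank Φ _ hsn le_rfl])
        · have h0s : 0 ≤ s := by omega
          have hcast : ((s.toNat : ℕ) : ℤ) = s := Int.toNat_of_nonneg h0s
          have := hgj s.toNat (by omega) (by rw [hcast]; intro h; exact absurd h.2 (lt_irrefl s))
          rwa [hcast] at this
    have hgFr' : g.symm (A.faceAt Φ r) = A.faceAt Φ r := by
      conv_lhs => rw [← hgFr]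
      exact g.symm_apply_apply _
    have hgFs' : g.symm (A.faceAt Φ s) = A.faceAt Φ s := by
      conv_lhs => rw [← hgFs]
      exact g.symm_apply_apply _
    refine ⟨⟨⟨fun x => ⟨g x.1, ?_, ?_⟩, fun x => ⟨g.symm x.1, ?_, ?_⟩,
      fun x => ?_, fun x => ?_⟩, ?_⟩, ?_⟩
    · exact le_trans (le_of_eq hgFr.symm) (g.le_iff_le.2 x.2.1)
    · exact le_trans (g.le_iff_le.2 x.2.2) (le_of_eq hgFs)
    · exact le_trans (le_of_eq hgFr'.symm) (g.symm.le_iff_le.2 x.2.1)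
    · exact le_trans (g.symm.le_iff_le.2 x.2.2) (le_of_eq hgFs')
    · exact Subtype.ext (g.symm_apply_apply x.1)
    · exact Subtype.ext (g.apply_symm_apply x.1)
    · intro a b
      exact Subtype.mk_le_mk.trans (g.le_iff_le.trans Subtype.coe_le_coe)
    · ext x
      simp only [Flag.mem_coe_iff]
      rw [mem_smul_iff]
      constructor
      · intro h
        have h1 : g.symm x.1 ∈ M1 := (hM1iff _).2 h
        have h2 : g (g.symm x.1) ∈ g • M1 := mem_smul_flag h1
        rw [g.apply_symm_apply, hgM] at h2
        exact (hM2iff x).1 h2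
      · intro h
        have h2 : x.1 ∈ M2 := (hM2iff x).2 h
        rw [← hgM, mem_smul_iff] at h2
        exact (hM1iff _).1 h2
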